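/- Consider the two-state Markov chain with states q₀ and q₁ and transition function δ given by δ(q₁)(q₁) = δ(q₁)(q₀) = 1/2 and δ(q₀)(q₀) = 1, and weight function w with w(q₁,q₁) = −1, w(q₁,q₀) = 0, w(q₀,q₀) = 0. Then for every initial credit c₀ ∈ ℕ, the probability starting from q₁ of the event PosEnergy(c₀) equals 1 − 2^{−(c₀+1)}; in particular the energy level drops below 0 with probability exactly 2^{−(c₀+1)}. -/

import Mathlib

open MeasureTheory Filter
open scoped Classical ENNReal

namespace MPP

variable {Q : Type}

/-- Probability that a Markov chain with transition function `κ` traverses the finite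
sequence `future` starting from `q`. -/
noncomputable def chainPathProb (κ : Q → PMF Q) : Q → List Q → ℝ≥0∞
  | _, [] => 1
  | q, q' :: rest => κ q q' * chainPathProb κ q' rest

/-- `μ` is the trajectory measure (Ionescu–Tulcea) of the Markov chain `κ` started at
`q`: it is the (unique) probability measure on `ℕ → Q` (product σ-algebra) giving
every cylinder its product probability. -/
def IsChainTrajMeasure [MeasurableSpace Q] (κ : Q → PMF Q) (q : Q)
    (μ : Measure (ℕ → Q)) : Prop :=
  IsProbabilityMeasure μ ∧
    ∀ (n : ℕ) (f : ℕ → Q),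
      μ {ρ | ∀ i ≤ n, ρ i = f i} =
        if f 0 = q then chainPathProb κ q ((List.range n).map fun i => f (i + 1)) else 0

/-- Energy level of the length-`n` prefix of a play. -/
def EL (w : Q → Q → ℤ) (ρ : ℕ → Q) (n : ℕ) : ℤ :=
  ∑ i ∈ Finset.range n, w (ρ i) (ρ (i + 1))

/-- Energy objective with initial credit `c₀`. -/
def PosEnergy (w : Q → Q → ℤ) (c₀ : ℕ) : Set (ℕ → Q) :=
  {ρ | ∀ n, 0 ≤ (c₀ : ℤ) + EL w ρ n}

/-- A closed recurrent set of a Markov chain: nonempty, closed under transitions, and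
strongly connected via positive-probability transitions. -/
def IsClosedRecurrent (κ : Q → PMF Q) (U : Set Q) : Prop :=
  U.Nonempty ∧ (∀ q ∈ U, (κ q).support ⊆ U) ∧
    ∀ q ∈ U, ∀ q' ∈ U,
      Relation.ReflTransGen (fun a b => a ∈ U ∧ b ∈ U ∧ κ a b ≠ 0) q q'

/-- In the two-state Markov chain with `δ(q₁)(q₁) = δ(q₁)(q₀) = 1/2`, `δ(q₀)(q₀) = 1`
(states encoded as `q₁ = true`, `q₀ = false`) and weights `w(q₁,q₁) = -1`,
`w(q₁,q₀) = 0`, `w(q₀,q₀) = 0`, for every initial credit `c₀` the probability from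
`q₁` of `PosEnergy(c₀)` is `1 - 2^{-(c₀+1)}`; in particular the energy level drops
below `0` with probability exactly `2^{-(c₀+1)}`. -/
theorem chainPathProb_eq (κ : Q → PMF Q) :
    ∀ (n : ℕ) (f : ℕ → Q),
      chainPathProb κ (f 0) ((List.range n).map fun i => f (i + 1)) =
        ∏ i ∈ Finset.range n, (κ (f i) (f (i + 1)) : ℝ≥0∞) := by
  intro n
  induction n with
  | zero => intro f; simp [chainPathProb]
  | succ n ih =>
      intro f
      rw [List.range_succ_eq_map]
      simp only [List.map_cons, List.map_map]
      have : ((List.range n).map ((fun i => f (i + 1)) ∘ (· + 1))) =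
          (List.range n).map fun i => (fun j => f (j + 1)) (i + 1) := by
        simp [Function.comp]
      rw [this]
      show κ (f 0) (f 1) * chainPathProb κ ((fun j => f (j+1)) 0)
          ((List.range n).map fun i => (fun j => f (j + 1)) (i + 1)) = _
      rw [ih (fun j => f (j + 1))]
      rw [Finset.prod_range_succ']
      ring

theorem two_state_chain_energy :
    ∀ (κ : Bool → PMF Bool) (w : Bool → Bool → ℤ),
      κ true true = 1 / 2 → κ true false = 1 / 2 → κ false false = 1 →
      w true true = -1 → w true false = 0 → w false false = 0 →
      ∀ (c₀ : ℕ) (μ : Measure (ℕ → Bool)), IsChainTrajMeasure κ true μ →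
        μ (PosEnergy w c₀) = 1 - (1 / 2 : ℝ≥0∞) ^ (c₀ + 1) ∧
          μ {ρ | ∃ n, (c₀ : ℤ) + EL w ρ n < 0} = (1 / 2 : ℝ≥0∞) ^ (c₀ + 1) := by
  intro κ w h1 h2 h3 h4 h5 h6 c₀ μ hμ
  haveI : IsProbabilityMeasure μ := hμ.1
  -- κ false true = 0
  have hft : (κ false) true = 0 := by
    have ht : (κ false) false + (κ false) true = 1 := by
      have := (κ false).tsum_coe
      rwa [tsum_bool] at this
    rw [h3] at ht
    have h' : (1:ℝ≥0∞) + (κ false) true = 1 + 0 := by rw [add_zero]; exact ht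
    exact (ENNReal.add_right_inj ENNReal.one_ne_top).1 h'
  -- cylinder measure formula
  have hcyl : ∀ (n : ℕ) (f : ℕ → Bool),
      μ {ρ | ∀ i ≤ n, ρ i = f i} =
        if f 0 = true then ∏ i ∈ Finset.range n, (κ (f i) (f (i+1)) : ℝ≥0∞) else 0 := by
    intro n f
    rw [hμ.2 n f]
    by_cases h : f 0 = true
    · rw [if_pos h, if_pos h, ← h, chainPathProb_eq]
    · rw [if_neg h, if_neg h]
  -- the set of "invalid" plays (containing a false→true transition) is null
  have hNnull : μ (⋃ i, {ρ : ℕ → Bool | ρ i = false ∧ ρ (i+1) = true}) = 0 := by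
    refine measure_iUnion_null fun i => ?_
    refine measure_mono_null (t := ⋃ g : Fin (i+2) → Bool,
      ({ρ : ℕ → Bool | ∀ j ≤ i+1, ρ j = (fun j => if h : j < i+2 then g ⟨j,h⟩ else true) j}
        ∩ {ρ | ρ i = false ∧ ρ (i+1) = true})) ?_ ?_
    · intro ρ hρ
      refine Set.mem_iUnion.2 ⟨fun j => ρ j, ⟨?_, hρ⟩⟩
      intro j hj
      simp only
      rw [dif_pos (by omega)]
    · refine measure_iUnion_null fun g => ?_
      set fg : ℕ → Bool := fun j => if h : j < i+2 then g ⟨j,h⟩ else true with hfg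
      by_cases hc : fg i = false ∧ fg (i+1) = true
      · refine measure_mono_null Set.inter_subset_left ?_
        rw [hcyl (i+1) fg]
        by_cases h0 : fg 0 = true
        · rw [if_pos h0]
          refine Finset.prod_eq_zero (Finset.self_mem_range_succ i) ?_
          rw [hc.1, hc.2]; exact hft
        · rw [if_neg h0]
      · have he : {ρ : ℕ → Bool | ∀ j ≤ i+1, ρ j = fg j}
            ∩ {ρ | ρ i = false ∧ ρ (i+1) = true} = ∅ := by
          ext ρ
          simp only [Set.mem_inter_iff, Set.mem_setOf_eq, Set.mem_empty_iff_false, iff_false]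
          rintro ⟨hcylρ, hi, hi1⟩
          exact hc ⟨by rw [← hcylρ i (by omega)]; exact hi,
            by rw [← hcylρ (i+1) le_rfl]; exact hi1⟩
        rw [he]; simp
  -- measure of the all-true cylinder of length c₀+1
  have hCmeas : μ {ρ : ℕ → Bool | ∀ i ≤ c₀+1, ρ i = true} = (1/2 : ℝ≥0∞) ^ (c₀+1) := by
    have := hcyl (c₀+1) (fun _ => true)
    simpa [h1] using this
  -- the all-true cylinder is contained in the bad event
  have hCB : {ρ : ℕ → Bool | ∀ i ≤ c₀+1, ρ i = true}
      ⊆ {ρ : ℕ → Bool | ∃ n, (c₀ : ℤ) + EL w ρ n < 0} := by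
    intro ρ hρ
    refine ⟨c₀+1, ?_⟩
    have hEL : EL w ρ (c₀+1) = -((c₀:ℤ)+1) := by
      unfold EL
      calc ∑ i ∈ Finset.range (c₀+1), w (ρ i) (ρ (i+1))
          = ∑ _i ∈ Finset.range (c₀+1), (-1 : ℤ) := by
            refine Finset.sum_congr rfl fun i hi => ?_
            rw [Finset.mem_range] at hi
            rw [hρ i (by omega), hρ (i+1) (by omega), h4]
        _ = -((c₀:ℤ)+1) := by
            rw [Finset.sum_const, nsmul_eq_mul, Finset.card_range]; push_cast; ring
    rw [hEL]; omega
  -- bad event is contained in all-true cylinder union the null set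
  have hBC : {ρ : ℕ → Bool | ∃ n, (c₀ : ℤ) + EL w ρ n < 0}
      ⊆ {ρ : ℕ → Bool | ∀ i ≤ c₀+1, ρ i = true}
        ∪ (⋃ i, {ρ : ℕ → Bool | ρ i = false ∧ ρ (i+1) = true}) := by
    intro ρ hρ
    by_cases hn : ρ ∈ ⋃ i, {ρ : ℕ → Bool | ρ i = false ∧ ρ (i+1) = true}
    · exact Or.inr hn
    · left
      have hvalid : ∀ i, ¬(ρ i = false ∧ ρ (i+1) = true) := by
        intro i hi; exact hn (Set.mem_iUnion.2 ⟨i, hi⟩)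
      by_contra hcC
      obtain ⟨j, hj, hjf⟩ : ∃ j ≤ c₀+1, ρ j = false := by
        simp only [Set.mem_setOf_eq] at hcC
        push_neg at hcC
        obtain ⟨j, hj1, hj2⟩ := hcC
        exact ⟨j, hj1, by simpa using hj2⟩
      have hpersist : ∀ k, ρ (j + k) = false := by
        intro k
        induction k with
        | zero => simpa using hjf
        | succ k ih =>
            cases hk : ρ (j + k + 1) with
            | false => rfl
            | true => exact absurd ⟨ih, hk⟩ (hvalid (j+k))
      obtain ⟨n, hn'⟩ := hρ
      have hterm : ∀ i ∈ Finset.range n,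
          (if i + 1 < j then (-1:ℤ) else 0) ≤ w (ρ i) (ρ (i+1)) := by
        intro i _
        by_cases hij : i + 1 < j
        · rw [if_pos hij]
          cases hx : ρ i with
          | false =>
              cases hy : ρ (i+1) with
              | false => rw [h6]; norm_num
              | true => exact absurd ⟨hx, hy⟩ (hvalid i)
          | true =>
              cases hy : ρ (i+1) with
              | false => rw [h5]; norm_num
              | true => rw [h4]
        · rw [if_neg hij]
          have hfalse : ρ (i+1) = false := by
            have := hpersist (i+1-j)
            rwa [Nat.add_sub_cancel' (by omega)] at this
          rw [hfalse]
          cases hx : ρ i with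
          | false => rw [h6]
          | true => rw [h5]
      have hsum1 : ∑ i ∈ Finset.range n, (if i + 1 < j then (-1:ℤ) else 0) ≤ EL w ρ n :=
        Finset.sum_le_sum hterm
      have hsum2 : ∑ i ∈ Finset.range n, (if i + 1 < j then (-1:ℤ) else 0)
          = -((((Finset.range n).filter (fun i => i + 1 < j)).card : ℤ)) := by
        rw [← Finset.sum_filter, Finset.sum_const, nsmul_eq_mul]; ring
      have hcard : (((Finset.range n).filter (fun i => i + 1 < j)).card : ℤ) ≤ (c₀ : ℤ) := by
        have hsub : ((Finset.range n).filter (fun i => i + 1 < j)) ⊆ Finset.range c₀ := by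
          intro i hi
          simp only [Finset.mem_filter, Finset.mem_range] at hi
          exact Finset.mem_range.2 (by omega)
        have := Finset.card_le_card hsub
        rw [Finset.card_range] at this
        exact_mod_cast this
      have : -(c₀:ℤ) ≤ EL w ρ n := by
        rw [hsum2] at hsum1
        linarith
      linarith
  -- hence the bad event has measure (1/2)^(c₀+1)
  have hBadC : μ {ρ : ℕ → Bool | ∃ n, (c₀ : ℤ) + EL w ρ n < 0} = (1/2 : ℝ≥0∞) ^ (c₀+1) := by
    refine le_antisymm ?_ ?_
    · calc μ {ρ : ℕ → Bool | ∃ n, (c₀ : ℤ) + EL w ρ n < 0}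
          ≤ μ ({ρ : ℕ → Bool | ∀ i ≤ c₀+1, ρ i = true}
            ∪ (⋃ i, {ρ : ℕ → Bool | ρ i = false ∧ ρ (i+1) = true})) := measure_mono hBC
        _ ≤ μ {ρ : ℕ → Bool | ∀ i ≤ c₀+1, ρ i = true}
            + μ (⋃ i, {ρ : ℕ → Bool | ρ i = false ∧ ρ (i+1) = true}) := measure_union_le _ _
        _ = (1/2 : ℝ≥0∞) ^ (c₀+1) := by rw [hNnull, hCmeas, add_zero]
    · rw [← hCmeas]; exact measure_mono hCB
  -- measurability of the bad event
  have hBadMeas : MeasurableSet {ρ : ℕ → Bool | ∃ n, (c₀ : ℤ) + EL w ρ n < 0} := by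
    have heq : {ρ : ℕ → Bool | ∃ n, (c₀ : ℤ) + EL w ρ n < 0}
        = ⋃ n, {ρ : ℕ → Bool | (c₀:ℤ) + EL w ρ n < 0} := by
      ext ρ; simp
    rw [heq]
    refine MeasurableSet.iUnion fun n => ?_
    have hm : Measurable fun ρ : ℕ → Bool => EL w ρ n := by
      unfold EL
      refine Finset.measurable_sum _ fun i _ => ?_
      have hpair : Measurable fun ρ : ℕ → Bool => (ρ i, ρ (i+1)) :=
        (measurable_pi_apply i).prodMk (measurable_pi_apply (i+1))
      exact (measurable_of_countable (fun p : Bool × Bool => w p.1 p.2)).comp hpair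
    have hpre : {ρ : ℕ → Bool | (c₀:ℤ) + EL w ρ n < 0}
        = (fun ρ : ℕ → Bool => EL w ρ n) ⁻¹' {z : ℤ | (c₀:ℤ) + z < 0} := rfl
    rw [hpre]
    exact hm trivial
  constructor
  · have hPos : PosEnergy w c₀ = {ρ : ℕ → Bool | ∃ n, (c₀ : ℤ) + EL w ρ n < 0}ᶜ := by
      ext ρ
      simp [PosEnergy, not_lt]
    rw [hPos, measure_compl hBadMeas (measure_ne_top μ _), measure_univ, hBadC]
  · exact hBadC


end MPP
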